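/- Under Assumption 1, let h ∈ (0,H) and let c = (r,z) : I → ℝ² be a characteristic curve on an interval I with c(t) ∈ (0,R)×(0,H) for all t ∈ I. If Γ(c(t₀)) > g(r_o)·ψ(h) for some t₀ ∈ I, then z(t) ≠ h for all t ∈ I; that is, points whose circulation exceeds the circulation value g(r_o)·ψ(h) at the point (r_o, h) lie in the information void: no characteristic curve through such a point ever reaches the minimum observable height line z = h. (This is one direction of the paper's characterization of the information void K_h.) -/

import Mathlib

open Set

/-- Circulation `Γ(r,z) = r·φ(r)·ψ(z)`. -/
noncomputable def circ (φ ψ : ℝ → ℝ) (p : ℝ × ℝ) : ℝ := p.1 * φ p.1 * ψ p.2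

/-- Vertical vorticity `ζ(r,z) = g'(r)·ψ(z)/r` where `g(r) = r·φ(r)`. -/
noncomputable def zeta (φ ψ : ℝ → ℝ) (r z : ℝ) : ℝ :=
  deriv (fun s => s * φ s) r * ψ z / r

/-- Radial vorticity `η(r,z) = −φ(r)·ψ'(z)`. -/
noncomputable def eta (φ ψ : ℝ → ℝ) (r z : ℝ) : ℝ := -(φ r * deriv ψ z)

/-- A characteristic curve on an interval `I`: a differentiable curve
`c(t) = (r(t), z(t))` with `r(t) > 0` satisfying `r' = η(r,z)`, `z' = ζ(r,z)` on `I`. -/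
def IsCharCurve (φ ψ : ℝ → ℝ) (I : Set ℝ) (c : ℝ → ℝ × ℝ) : Prop :=
  (∀ t ∈ I, 0 < (c t).1) ∧
  ∀ t ∈ I,
    HasDerivWithinAt c
      (eta φ ψ (c t).1 (c t).2, zeta φ ψ (c t).1 (c t).2) I t

/-- Points whose circulation exceeds the circulation value `g(r_o)·ψ(h)` at `(r_o, h)`
lie in the information void: no characteristic curve through such a point ever reaches
the minimum observable height line `z = h`. -/
theorem high_circulation_never_reaches_MOH
    (R H : ℝ) (hR : 0 < R) (hH : 0 < H)
    (φ ψ : ℝ → ℝ)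
    (hφC2 : ContDiff ℝ 2 φ) (hψC2 : ContDiff ℝ 2 ψ)
    (hφ0 : φ 0 = 0) (hψ0 : ψ 0 = 0)
    (hφpos : ∀ r ∈ Ioo (0:ℝ) R, 0 < φ r)
    (hψpos : ∀ z ∈ Ioo (0:ℝ) H, 0 < ψ z)
    (r_o : ℝ) (hro : r_o ∈ Ioo (0:ℝ) R)
    (z_o : ℝ) (hzo : z_o ∈ Ioo (0:ℝ) H)
    (hg'ro : deriv (fun s => s * φ s) r_o = 0)
    (hg'ne : ∀ r ∈ Ioo (0:ℝ) R, r ≠ r_o → deriv (fun s => s * φ s) r ≠ 0)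
    (hψ'zo : deriv ψ z_o = 0)
    (hψ'ne : ∀ z ∈ Ioo (0:ℝ) H, z ≠ z_o → deriv ψ z ≠ 0)
    (hgmax : ∀ r ∈ Ioo (0:ℝ) R, r * φ r ≤ r_o * φ r_o)
    (hψmax : ∀ z ∈ Ioo (0:ℝ) H, ψ z ≤ ψ z_o)
    (h : ℝ) (hh : h ∈ Ioo (0:ℝ) H)
    (I : Set ℝ) (hI : I.OrdConnected)
    (c : ℝ → ℝ × ℝ) (hc : IsCharCurve φ ψ I c)
    (hcin : ∀ t ∈ I, c t ∈ Ioo (0:ℝ) R ×ˢ Ioo (0:ℝ) H)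
    (t₀ : ℝ) (ht₀ : t₀ ∈ I)
    (hΓ : circ φ ψ (c t₀) > r_o * φ r_o * ψ h) :
    ∀ t ∈ I, (c t).2 ≠ h := by
  intro t ht hzt
  -- circulation is constant along the curve
  have hφd : Differentiable ℝ φ := hφC2.differentiable (by norm_num)
  have hψd : Differentiable ℝ ψ := hψC2.differentiable (by norm_num)
  have hGd : Differentiable ℝ (fun s => s * φ s) := differentiable_id.mul hφd
  have key : ∀ s ∈ I, HasDerivWithinAt (fun u => circ φ ψ (c u)) 0 I s := by
    intro s hs
    have hr0 : (c s).1 ≠ 0 := ne_of_gt (hc.1 s hs)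
    have hcd := hc.2 s hs
    have hrd : HasDerivWithinAt (fun u => (c u).1)
        (eta φ ψ (c s).1 (c s).2) I s := hcd.fst
    have hzd : HasDerivWithinAt (fun u => (c u).2)
        (zeta φ ψ (c s).1 (c s).2) I s := hcd.snd
    have hG : HasDerivAt (fun x => x * φ x)
        (deriv (fun x => x * φ x) (c s).1) (c s).1 :=
      (hGd (c s).1).hasDerivAt
    have hψ' : HasDerivAt ψ (deriv ψ (c s).2) (c s).2 := (hψd (c s).2).hasDerivAt
    have h1 : HasDerivWithinAt (fun u => (c u).1 * φ (c u).1)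
        (deriv (fun x => x * φ x) (c s).1 * eta φ ψ (c s).1 (c s).2) I s := by
      have := hG.comp_hasDerivWithinAt s hrd; exact this
    have h2 : HasDerivWithinAt (fun u => ψ ((c u).2))
        (deriv ψ (c s).2 * zeta φ ψ (c s).1 (c s).2) I s :=
      hψ'.comp_hasDerivWithinAt s hzd
    have h3 := h1.mul h2
    have heq : deriv (fun x => x * φ x) (c s).1 * eta φ ψ (c s).1 (c s).2 * ψ ((c s).2)
        + (c s).1 * φ (c s).1 * (deriv ψ (c s).2 * zeta φ ψ (c s).1 (c s).2) = 0 := by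
      simp only [eta, zeta]
      field_simp
      ring
    have h4 : HasDerivWithinAt (fun u => (c u).1 * φ (c u).1 * ψ ((c u).2)) 0 I s := by
      rw [← heq]; exact h3
    exact h4.congr (fun u _ => rfl) rfl
  have hconv : Convex ℝ I := by
    rw [convex_iff_ordConnected]; exact hI
  have hconst : circ φ ψ (c t) = circ φ ψ (c t₀) := by
    have := hconv.norm_image_sub_le_of_norm_hasDerivWithin_le
      (f := fun u => circ φ ψ (c u)) (C := 0)
      (fun s hs => key s hs) (fun s hs => by simp) ht₀ ht
    have : ‖circ φ ψ (c t) - circ φ ψ (c t₀)‖ ≤ 0 := by simpa using this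
    have := le_antisymm this (norm_nonneg _)
    rwa [norm_eq_zero, sub_eq_zero] at this
  have hrt := (hcin t ht).1
  have hle : circ φ ψ (c t) ≤ r_o * φ r_o * ψ h := by
    have := hgmax (c t).1 hrt
    have hψh : 0 < ψ h := hψpos h hh
    simp only [circ, hzt]
    exact mul_le_mul_of_nonneg_right this hψh.le
  linarith [hΓ, hconst ▸ hle]
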